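/- If a vector θ ∈ R^M of angles is realizable by a planar point set (i.e., there exist points p₁,...,p_N in R² with θ_{m(i,j,k)} = ∠(p_j - p_i, p_k - p_i) for all triplets), then for every 4-element subset {a,b,c,d} of indices with all involved angles in (0, π), the quadrilateral sine constraint sin θ_b(a,c)·sin θ_c(a,d)·sin θ_d(a,b) = sin θ_b(a,d)·sin θ_c(a,b)·sin θ_d(a,c) holds. -/
import Mathlib


open Real EuclideanGeometry

private lemma gram_aux {V : Type*} [NormedAddCommGroup V] [InnerProductSpace ℝ V] (u v : V) :
    Real.sin (InnerProductGeometry.angle u v) * (‖u‖ * ‖v‖)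
      = Real.sin (InnerProductGeometry.angle (u - v) (-v)) * (‖u - v‖ * ‖-v‖) := by
  rw [InnerProductGeometry.sin_angle_mul_norm_mul_norm,
    InnerProductGeometry.sin_angle_mul_norm_mul_norm]
  congr 1
  simp only [inner_sub_left, inner_sub_right, inner_neg_left, inner_neg_right,
    real_inner_comm u v]
  ring

/-- Law of sines form: twice the area of a triangle computed at two vertices. -/
private lemma two_area (a b c : EuclideanSpace ℝ (Fin 2)) :
    Real.sin (∠ a b c) * (dist b a * dist b c)
      = Real.sin (∠ a c b) * (dist c a * dist c b) := by
  have h := gram_aux (a - b) (c - b)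
  have h1 : a - b - (c - b) = a - c := by abel
  have h2 : -(c - b) = b - c := by abel
  rw [h1, h2] at h
  simpa only [EuclideanGeometry.angle, dist_eq_norm_vsub (EuclideanSpace ℝ (Fin 2)),
    vsub_eq_sub, dist_comm b a, dist_comm c a, dist_comm c b,
    dist_eq_norm, norm_sub_rev b a, norm_sub_rev c a, norm_sub_rev c b] using h

/-- If θ is realizable by a planar point set (θ i j k is the inner angle
at p i between p j and p k), then every 4-element subset {a,b,c,d} of indices whose
involved angles are all in (0, π) satisfies the quadrilateral sine constraint. -/
theorem realizable_implies_quad_constraint (N : ℕ)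
    (θ : Fin N → Fin N → Fin N → ℝ) (p : Fin N → EuclideanSpace ℝ (Fin 2))
    (hreal : ∀ i j k : Fin N, θ i j k = ∠ (p j) (p i) (p k)) :
    ∀ a b c d : Fin N, a ≠ b → a ≠ c → a ≠ d → b ≠ c → b ≠ d → c ≠ d →
      θ b a c ∈ Set.Ioo 0 π → θ b a d ∈ Set.Ioo 0 π →
      θ c a d ∈ Set.Ioo 0 π → θ c a b ∈ Set.Ioo 0 π →
      θ d a b ∈ Set.Ioo 0 π → θ d a c ∈ Set.Ioo 0 π →
      Real.sin (θ b a c) * Real.sin (θ c a d) * Real.sin (θ d a b)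
        = Real.sin (θ b a d) * Real.sin (θ c a b) * Real.sin (θ d a c) := by
  intro a b c d _ _ _ _ _ _ hbac hbad hcad hcab hdab hdac
  simp only [hreal] at *
  by_cases hab : p a = p b
  · by_cases hac : p a = p c
    · by_cases had : p a = p d
      · rw [← hab, ← hac, ← had]
      · exfalso
        have : ∠ (p a) (p d) (p b) = 0 := by
          rw [← hab]; exact EuclideanGeometry.angle_self_of_ne had
        rw [this] at hdab; exact lt_irrefl 0 hdab.1
    · exfalso
      have : ∠ (p a) (p c) (p b) = 0 := by
        rw [← hab]; exact EuclideanGeometry.angle_self_of_ne hac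
      rw [this] at hcab; exact lt_irrefl 0 hcab.1
  · by_cases hac : p a = p c
    · exfalso
      have : ∠ (p a) (p b) (p c) = 0 := by
        rw [← hac]; exact EuclideanGeometry.angle_self_of_ne hab
      rw [this] at hbac; exact lt_irrefl 0 hbac.1
    · by_cases had : p a = p d
      · exfalso
        have : ∠ (p a) (p b) (p d) = 0 := by
          rw [← had]; exact EuclideanGeometry.angle_self_of_ne hab
        rw [this] at hbad; exact lt_irrefl 0 hbad.1
      · -- p a distinct from p b, p c, p d
        by_cases hbc : p b = p c
        · rw [← hbc]; ring
        · by_cases hbd : p b = p d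
          · rw [← hbd]; ring
          · by_cases hcd : p c = p d
            · rw [← hcd]; ring
            · -- all points distinct; use law of sines
              have e1 := two_area (p a) (p b) (p c)
              have e2 := two_area (p a) (p c) (p d)
              have e3 := two_area (p a) (p d) (p b)
              set s1 := Real.sin (∠ (p a) (p b) (p c))
              set s2 := Real.sin (∠ (p a) (p c) (p d))
              set s3 := Real.sin (∠ (p a) (p d) (p b))
              set t1 := Real.sin (∠ (p a) (p b) (p d))
              set t2 := Real.sin (∠ (p a) (p c) (p b))
              set t3 := Real.sin (∠ (p a) (p d) (p c))
              have dba : (0:ℝ) < dist (p b) (p a) := dist_pos.2 fun h => hab h.symm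
              have dca : (0:ℝ) < dist (p c) (p a) := dist_pos.2 fun h => hac h.symm
              have dda : (0:ℝ) < dist (p d) (p a) := dist_pos.2 fun h => had h.symm
              have dbc : (0:ℝ) < dist (p b) (p c) := dist_pos.2 hbc
              have dbd : (0:ℝ) < dist (p b) (p d) := dist_pos.2 hbd
              have dcd : (0:ℝ) < dist (p c) (p d) := dist_pos.2 hcd
              have ddb : (0:ℝ) < dist (p d) (p b) := dist_pos.2 fun h => hbd h.symm
              have hK : (dist (p b) (p a) * dist (p b) (p c)) *
                  (dist (p c) (p a) * dist (p c) (p d)) *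
                  (dist (p d) (p a) * dist (p d) (p b)) ≠ 0 := ne_of_gt (mul_pos (mul_pos (mul_pos dba dbc) (mul_pos dca dcd)) (mul_pos dda ddb))
              apply mul_right_cancel₀ hK
              have hc1 : dist (p c) (p b) = dist (p b) (p c) := dist_comm _ _
              have hc2 : dist (p d) (p c) = dist (p c) (p d) := dist_comm _ _
              have hc3 : dist (p b) (p d) = dist (p d) (p b) := dist_comm _ _
              rw [hc1] at e1; rw [hc2] at e2; rw [hc3] at e3
              linear_combination
                (s2 * (dist (p c) (p a) * dist (p c) (p d))) *
                  (s3 * (dist (p d) (p a) * dist (p d) (p b))) * e1 +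
                (t2 * (dist (p c) (p a) * dist (p b) (p c))) *
                  (s3 * (dist (p d) (p a) * dist (p d) (p b))) * e2 +
                (t2 * (dist (p c) (p a) * dist (p b) (p c))) *
                  (t3 * (dist (p d) (p a) * dist (p c) (p d))) * e3
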